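/- Let p be a prime and, for m ≥ 1, define valuation matrices V_i = [[v, 0],[p^{i-n}, ∞]] for 1 ≤ i < n and V_n = [[0, ?],[∞, ∞]] with entries in ℝ ∪ {∞}, multiplied by the tropical rule (min, +): (V·W)_{jk} = min_l (V_{jl} + W_{lk}). Suppose v ≥ 1 (v may be ∞). Then the left column of the tropical product V_{n-1}' := ([[v,0],[p^{1-n},∞]]·[[v,0],[p^{2-n},∞]] ⋯ [[v,0],[p^{-1},∞]]) · [[0,?],[∞,∞]] equals (v + p^{-2} + p^{-4} + ⋯ + p^{2-n}, p^{-1} + p^{-3} + ⋯ + p^{1-n}) when n is even, and (p^{-1} + p^{-3} + ⋯ + p^{2-n}, v + p^{-2} + p^{-4} + ⋯ + p^{1-n}) when n is odd. -/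

import Mathlib

/-- Tropical (min, +) multiplication of 2×2 matrices with entries in `ℝ ∪ {∞}`. -/
noncomputable def tropMul (A B : Matrix (Fin 2) (Fin 2) (WithTop ℝ)) : Matrix (Fin 2) (Fin 2) (WithTop ℝ) :=
  Matrix.of fun j k => min (A j 0 + B 0 k) (A j 1 + B 1 k)

/-- The tropical identity matrix `[[0, ∞], [∞, 0]]`. -/
noncomputable def tropOne : Matrix (Fin 2) (Fin 2) (WithTop ℝ) := Matrix.of ![![0, ⊤], ![⊤, 0]]

namespace TropAux

noncomputable def sa (p n m : ℕ) : ℝ :=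
  ∑ k ∈ Finset.range (m / 2), (p : ℝ) ^ (2 * (k : ℤ) + (2 - (n : ℤ)))

noncomputable def sc (p n m : ℕ) : ℝ :=
  ∑ k ∈ Finset.range ((m + 1) / 2), (p : ℝ) ^ (2 * (k : ℤ) + (1 - (n : ℤ)))

noncomputable def AA (p n : ℕ) (v : WithTop ℝ) (m : ℕ) : WithTop ℝ :=
  if Even m then ((sa p n m : ℝ) : WithTop ℝ) else v + ((sa p n m : ℝ) : WithTop ℝ)

noncomputable def CC (p n : ℕ) (v : WithTop ℝ) (m : ℕ) : WithTop ℝ :=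
  if Even m then v + ((sc p n m : ℝ) : WithTop ℝ) else ((sc p n m : ℝ) : WithTop ℝ)

lemma sa_zero (p n : ℕ) : sa p n 0 = 0 := by simp [sa]
lemma sa_one (p n : ℕ) : sa p n 1 = 0 := by simp [sa]
lemma sc_one (p n : ℕ) : sc p n 1 = (p : ℝ) ^ ((1 : ℤ) - (n : ℤ)) := by
  rw [sc, show (1 + 1) / 2 = 1 from rfl, Finset.sum_range_one]
  norm_num

lemma sa_succ_odd (p n m : ℕ) (h : m % 2 = 1) :
    sa p n (m + 1) = sa p n m + (p : ℝ) ^ (((m : ℤ) + 1) - (n : ℤ)) := by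
  have h1 : (m + 1) / 2 = m / 2 + 1 := by omega
  rw [sa, sa, h1, Finset.sum_range_succ]
  congr 2
  omega
lemma sa_succ_even (p n m : ℕ) (h : m % 2 = 0) : sa p n (m + 1) = sa p n m := by
  have h1 : (m + 1) / 2 = m / 2 := by omega
  rw [sa, sa, h1]

lemma sc_succ_even (p n m : ℕ) (h : m % 2 = 0) :
    sc p n (m + 1) = sc p n m + (p : ℝ) ^ (((m : ℤ) + 1) - (n : ℤ)) := by
  have h1 : (m + 1 + 1) / 2 = (m + 1) / 2 + 1 := by omega
  rw [sc, sc, h1, Finset.sum_range_succ]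
  congr 2
  omega
lemma sc_succ_odd (p n m : ℕ) (h : m % 2 = 1) : sc p n (m + 1) = sc p n m := by
  have h1 : (m + 1 + 1) / 2 = (m + 1) / 2 := by omega
  rw [sc, sc, h1]

lemma pat1 (v : WithTop ℝ) (s s' x : ℝ) (h : s ≤ s' + x) :
    min (((s : ℝ) : WithTop ℝ) + v) ((v + ((s' : ℝ) : WithTop ℝ)) + ((x : ℝ) : WithTop ℝ)) =
      v + ((s : ℝ) : WithTop ℝ) := by
  rw [add_comm ((s : ℝ) : WithTop ℝ) v, add_assoc, ← WithTop.coe_add, min_eq_left]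
  exact add_le_add_right (WithTop.coe_le_coe.2 h) v

lemma pat2 (v : WithTop ℝ) (hv : 1 ≤ v) (s x : ℝ) (hx : ((x : ℝ) : WithTop ℝ) ≤ 1) :
    min ((v + ((s : ℝ) : WithTop ℝ)) + v) (((s : ℝ) : WithTop ℝ) + ((x : ℝ) : WithTop ℝ)) =
      (((s + x : ℝ)) : WithTop ℝ) := by
  rw [WithTop.coe_add, min_eq_right]
  exact add_le_add (le_add_of_nonneg_left (zero_le_one.trans hv)) (hx.trans hv)

lemma key (p n : ℕ) (hp : 1 ≤ (p : ℝ)) (v : WithTop ℝ) (hv : 1 ≤ v)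
    (V : ℕ → Matrix (Fin 2) (Fin 2) (WithTop ℝ))
    (hV : ∀ i, 1 ≤ i → i ≤ n - 1 →
      V i = Matrix.of ![![v, 0], ![((((p : ℝ) ^ ((i : ℤ) - (n : ℤ))) : ℝ) : WithTop ℝ), ⊤]]) :
    ∀ m, 1 ≤ m → m ≤ n - 1 →
      ((List.range m).foldl (fun M i => tropMul M (V (i + 1))) tropOne 0 0 = AA p n v m) ∧
      ((List.range m).foldl (fun M i => tropMul M (V (i + 1))) tropOne 0 1 = AA p n v (m - 1)) ∧
      ((List.range m).foldl (fun M i => tropMul M (V (i + 1))) tropOne 1 0 = CC p n v m) ∧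
      ((List.range m).foldl (fun M i => tropMul M (V (i + 1))) tropOne 1 1 =
        (if m = 1 then (⊤ : WithTop ℝ) else CC p n v (m - 1))) := by
  intro m hm
  induction m, hm using Nat.le_induction with
  | base =>
    intro h1
    set Q := (List.range 1).foldl (fun M i => tropMul M (V (i + 1))) tropOne with hQdef
    have hV1 := hV 1 le_rfl h1
    have hQ : Q = Matrix.of ![![v, 0],
        ![((((p : ℝ) ^ ((1 : ℤ) - (n : ℤ))) : ℝ) : WithTop ℝ), ⊤]] := by
      show (List.range 1).foldl _ tropOne = _
      rw [show List.range 1 = [0] from rfl, List.foldl_cons, List.foldl_nil, hV1]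
      funext j k
      fin_cases j <;> fin_cases k <;>
        simp [tropMul, tropOne, min_eq_left (le_top : _ ≤ (⊤ : WithTop ℝ)),
          min_eq_right (le_top : _ ≤ (⊤ : WithTop ℝ))]
    rw [hQ]
    refine ⟨?_, ?_, ?_, ?_⟩
    · simp [AA, Nat.even_iff, sa_one]
    · simp [AA, sa_zero]
    · simp [CC, Nat.even_iff, sc_one]
    · simp
  | succ m hm ih =>
    intro hmn
    obtain ⟨j, rfl⟩ : ∃ j, m = j + 1 := ⟨m - 1, by omega⟩
    obtain ⟨h00, h01, h10, h11⟩ := ih (by omega)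
    set Q := (List.range (j + 1 + 1)).foldl (fun M i => tropMul M (V (i + 1))) tropOne with hQdef
    set Q₀ := (List.range (j + 1)).foldl (fun M i => tropMul M (V (i + 1))) tropOne with hQ₀
    have hQ : Q = tropMul Q₀ (V (j + 1 + 1)) := by
      show (List.range (j + 1 + 1)).foldl _ tropOne = _
      rw [List.range_succ, List.foldl_append, List.foldl_cons, List.foldl_nil]
    set x : ℝ := (p : ℝ) ^ ((((j + 1 + 1 : ℕ) : ℤ)) - (n : ℤ)) with hxdef
    have hVj' : V (j + 1 + 1) = Matrix.of ![![v, 0], ![((x : ℝ) : WithTop ℝ), ⊤]] :=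
      hV (j + 1 + 1) (by omega) (by omega)
    have hx1 : ((x : ℝ) : WithTop ℝ) ≤ 1 := by
      rw [show (1 : WithTop ℝ) = ((1 : ℝ) : WithTop ℝ) by norm_num]
      refine WithTop.coe_le_coe.2 (zpow_le_one_of_nonpos₀ hp ?_)
      push_cast
      omega
    have hxe : (p : ℝ) ^ ((((j + 1 : ℕ) : ℤ) + 1) - (n : ℤ)) = x := by
      rw [hxdef]
      congr 1 <;> (push_cast; ring)
    have hxmono : (p : ℝ) ^ ((((j : ℕ) : ℤ) + 1) - (n : ℤ)) ≤ x := by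
      refine zpow_le_zpow_right₀ hp ?_
      push_cast
      omega
    -- entry formulas
    have e00 : Q 0 0 = min (Q₀ 0 0 + v) (Q₀ 0 1 + ((x : ℝ) : WithTop ℝ)) := by
      rw [hQ, hVj']; simp [tropMul]
    have e01 : Q 0 1 = Q₀ 0 0 := by
      rw [hQ, hVj']
      simp [tropMul]
    have e10 : Q 1 0 = min (Q₀ 1 0 + v) (Q₀ 1 1 + ((x : ℝ) : WithTop ℝ)) := by
      rw [hQ, hVj']; simp [tropMul]
    have e11 : Q 1 1 = Q₀ 1 0 := by
      rw [hQ, hVj']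
      simp [tropMul]
    refine ⟨?_, ?_, ?_, ?_⟩
    · -- Q 0 0 = AA (j+1+1)
      rw [e00, h00, h01]
      simp only [Nat.add_sub_cancel]
      rcases Nat.even_or_odd j with hj | hj
      · have hj2 : j % 2 = 0 := Nat.even_iff.1 hj
        rw [AA, AA, AA, if_neg (by rw [Nat.even_iff]; omega : ¬ Even (j + 1)), if_pos hj,
          if_pos (by rw [Nat.even_iff]; omega : Even (j + 1 + 1)),
          sa_succ_odd p n (j + 1) (by omega), hxe, sa_succ_even p n j hj2]
        exact pat2 v hv (sa p n j) x hx1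
      · have hj2 : j % 2 = 1 := Nat.odd_iff.1 hj
        rw [AA, AA, AA, if_pos (by rw [Nat.even_iff]; omega : Even (j + 1)),
          if_neg (by rw [Nat.even_iff]; omega : ¬ Even j),
          if_neg (by rw [Nat.even_iff]; omega : ¬ Even (j + 1 + 1)),
          sa_succ_even p n (j + 1) (by omega)]
        refine pat1 v (sa p n (j + 1)) (sa p n j) x ?_
        rw [sa_succ_odd p n j hj2]
        exact add_le_add_right hxmono _
    · -- Q 0 1 = AA (j+1)
      rw [e01, h00]
      simp
    · -- Q 1 0 = CC (j+1+1)
      rw [e10, h10, h11]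
      simp only [Nat.add_sub_cancel]
      by_cases hj0 : j + 1 = 1
      · have hj : j = 0 := by omega
        rw [if_pos hj0, top_add, min_eq_left le_top, CC, CC,
          if_neg (by rw [Nat.even_iff]; omega : ¬ Even (j + 1)),
          if_pos (by rw [Nat.even_iff]; omega : Even (j + 1 + 1)),
          sc_succ_odd p n (j + 1) (by omega), add_comm]
      · rw [if_neg hj0]
        have hj1 : 1 ≤ j := by omega
        rcases Nat.even_or_odd j with hj | hj
        · have hj2 : j % 2 = 0 := Nat.even_iff.1 hj
          rw [CC, CC, CC, if_neg (by rw [Nat.even_iff]; omega : ¬ Even (j + 1)), if_pos hj,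
            if_pos (by rw [Nat.even_iff]; omega : Even (j + 1 + 1)),
            sc_succ_odd p n (j + 1) (by omega)]
          refine pat1 v (sc p n (j + 1)) (sc p n j) x ?_
          rw [sc_succ_even p n j hj2]
          exact add_le_add_right hxmono _
        · have hj2 : j % 2 = 1 := Nat.odd_iff.1 hj
          rw [CC, CC, CC, if_pos (by rw [Nat.even_iff]; omega : Even (j + 1)),
            if_neg (by rw [Nat.even_iff]; omega : ¬ Even j),
            if_neg (by rw [Nat.even_iff]; omega : ¬ Even (j + 1 + 1)),
            sc_succ_even p n (j + 1) (by omega), hxe, sc_succ_odd p n j hj2]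
          exact pat2 v hv (sc p n j) x hx1
    · -- Q 1 1
      rw [e11, h10, if_neg (by omega : ¬ j + 1 + 1 = 1)]
      simp



lemma sum_Icc_eq_range (t : ℕ) (f : ℕ → ℝ) :
    ∑ k ∈ Finset.Icc 1 t, f k = ∑ k ∈ Finset.range t, f (k + 1) := by
  rw [← Finset.Ico_add_one_right_eq_Icc, Finset.sum_Ico_eq_sum_range]
  simp [add_comm]

lemma sum_reflect (p t : ℕ) (e : ℤ) :
    ∑ k ∈ Finset.range t, (p : ℝ) ^ (2 * (k : ℤ) + e) =
      ∑ k ∈ Finset.Icc 1 t, (p : ℝ) ^ (2 * (t : ℤ) + e - 2 * (k : ℤ)) := by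
  rw [sum_Icc_eq_range, ← Finset.sum_range_reflect]
  refine Finset.sum_congr rfl fun k hk => ?_
  have hk' := Finset.mem_range.1 hk
  congr 1
  omega

end TropAux

theorem tropical_valuation_matrix (p n : ℕ) (hp : p.Prime) (hn : 2 ≤ n)
    (v c : WithTop ℝ) (hv : 1 ≤ v) :
    let V : ℕ → Matrix (Fin 2) (Fin 2) (WithTop ℝ) := fun i =>
      if i = n then Matrix.of ![![0, c], ![⊤, ⊤]]
      else Matrix.of ![![v, 0], ![((((p : ℝ) ^ ((i : ℤ) - (n : ℤ))) : ℝ) : WithTop ℝ), ⊤]]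
    let P : Matrix (Fin 2) (Fin 2) (WithTop ℝ) :=
      (List.range n).foldl (fun M i => tropMul M (V (i + 1))) tropOne
    (Even n →
      P 0 0 = v + (((∑ k ∈ Finset.Icc 1 (n / 2 - 1), (p : ℝ) ^ (-(2 * (k : ℤ)))) : ℝ) : WithTop ℝ) ∧
      P 1 0 = (((∑ k ∈ Finset.Icc 1 (n / 2), (p : ℝ) ^ (-(2 * (k : ℤ)) + 1)) : ℝ) : WithTop ℝ)) ∧
    (Odd n →
      P 0 0 = (((∑ k ∈ Finset.Icc 1 ((n - 1) / 2), (p : ℝ) ^ (-(2 * (k : ℤ)) + 1)) : ℝ) : WithTop ℝ) ∧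
      P 1 0 = v + (((∑ k ∈ Finset.Icc 1 ((n - 1) / 2), (p : ℝ) ^ (-(2 * (k : ℤ)))) : ℝ) : WithTop ℝ)) := by
  intro V P
  have hp1 : 1 ≤ (p : ℝ) := by exact_mod_cast hp.one_lt.le
  have hVn : V n = Matrix.of ![![0, c], ![⊤, ⊤]] := if_pos rfl
  have hVg : ∀ i, 1 ≤ i → i ≤ n - 1 →
      V i = Matrix.of ![![v, 0], ![((((p : ℝ) ^ ((i : ℤ) - (n : ℤ))) : ℝ) : WithTop ℝ), ⊤]] :=
    fun i _ h2 => if_neg (by omega)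
  obtain ⟨h00, h01, h10, h11⟩ := TropAux.key p n hp1 v hv V hVg (n - 1) (by omega) le_rfl
  set Q := (List.range (n - 1)).foldl (fun M i => tropMul M (V (i + 1))) tropOne with hQdef
  have hP : P = tropMul Q (V (n - 1 + 1)) := by
    show (List.range n).foldl _ tropOne = _
    conv_lhs => rw [show n = n - 1 + 1 by omega, List.range_succ]
    rw [List.foldl_append, List.foldl_cons, List.foldl_nil]
  rw [show n - 1 + 1 = n by omega, hVn] at hP
  have hP00 : P 0 0 = TropAux.AA p n v (n - 1) := by
    rw [hP]
    simp [tropMul, h00]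
  have hP10 : P 1 0 = TropAux.CC p n v (n - 1) := by
    rw [hP]
    simp [tropMul, h10]
  constructor
  · intro he
    have hn2 : n % 2 = 0 := Nat.even_iff.1 he
    have hodd : ¬ Even (n - 1) := by rw [Nat.even_iff]; omega
    have hsa : TropAux.sa p n (n - 1) =
        ∑ k ∈ Finset.Icc 1 (n / 2 - 1), (p : ℝ) ^ (-(2 * (k : ℤ))) := by
      rw [TropAux.sa, show (n - 1) / 2 = n / 2 - 1 by omega,
        TropAux.sum_reflect p (n / 2 - 1) (2 - (n : ℤ))]
      refine Finset.sum_congr rfl fun k hk => ?_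
      congr 1
      omega
    have hsc : TropAux.sc p n (n - 1) =
        ∑ k ∈ Finset.Icc 1 (n / 2), (p : ℝ) ^ (-(2 * (k : ℤ)) + 1) := by
      rw [TropAux.sc, show (n - 1 + 1) / 2 = n / 2 by omega,
        TropAux.sum_reflect p (n / 2) (1 - (n : ℤ))]
      refine Finset.sum_congr rfl fun k hk => ?_
      congr 1
      omega
    constructor
    · rw [hP00, TropAux.AA, if_neg hodd, hsa]
    · rw [hP10, TropAux.CC, if_neg hodd, hsc]
  · intro ho
    have hn2 : n % 2 = 1 := Nat.odd_iff.1 ho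
    have heven : Even (n - 1) := by rw [Nat.even_iff]; omega
    have hsa : TropAux.sa p n (n - 1) =
        ∑ k ∈ Finset.Icc 1 ((n - 1) / 2), (p : ℝ) ^ (-(2 * (k : ℤ)) + 1) := by
      rw [TropAux.sa, TropAux.sum_reflect p ((n - 1) / 2) (2 - (n : ℤ))]
      refine Finset.sum_congr rfl fun k hk => ?_
      congr 1
      omega
    have hsc : TropAux.sc p n (n - 1) =
        ∑ k ∈ Finset.Icc 1 ((n - 1) / 2), (p : ℝ) ^ (-(2 * (k : ℤ))) := by
      rw [TropAux.sc, show (n - 1 + 1) / 2 = (n - 1) / 2 by omega,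
        TropAux.sum_reflect p ((n - 1) / 2) (1 - (n : ℤ))]
      refine Finset.sum_congr rfl fun k hk => ?_
      congr 1
      omega
    constructor
    · rw [hP00, TropAux.AA, if_pos heven, hsa]
    · rw [hP10, TropAux.CC, if_pos heven, hsc]
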